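/- Let A be positive semidefinite, T an A-bounded operator with dw_A(T) = ‖T‖_A², and suppose there exists a unit A-vector x (i.e., ‖x‖_A = 1) with ‖Tx‖_A = ‖T‖_A. Then ⟨Tx,x⟩_A = 0. -/

import Mathlib

noncomputable section

namespace DW

variable {H : Type*} [NormedAddCommGroup H] [InnerProductSpace ℂ H]

/-- The semi-inner product induced by `A`: `⟨x,y⟩_A = ⟨Ax, y⟩`. -/
def innA (A : H →L[ℂ] H) (x y : H) : ℂ := inner ℂ (A x) y

/-- The seminorm induced by `A`. -/
def normA (A : H →L[ℂ] H) (x : H) : ℝ := Real.sqrt (innA A x x).re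

/-- `T` is `A`-bounded. -/
def IsABounded (A T : H →L[ℂ] H) : Prop := ∃ c > 0, ∀ x, normA A (T x) ≤ c * normA A x

/-- `S` is an `A`-adjoint of `T`. -/
def IsAAdjointPair (A T S : H →L[ℂ] H) : Prop := ∀ x y, innA A (T x) y = innA A x (S y)

/-- The `A`-operator seminorm. -/
def opNormA (A T : H →L[ℂ] H) : ℝ := sSup {r | ∃ x, normA A x = 1 ∧ r = normA A (T x)}

/-- The `A`-minimum modulus. -/
def mA (A T : H →L[ℂ] H) : ℝ := sInf {r | ∃ x, normA A x = 1 ∧ r = normA A (T x)}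

/-- The `A`-numerical radius. -/
def wA (A T : H →L[ℂ] H) : ℝ :=
  sSup {r | ∃ x, normA A x = 1 ∧ r = ‖innA A (T x) x‖}

/-- The `A`-Crawford number. -/
def cA (A T : H →L[ℂ] H) : ℝ :=
  sInf {r | ∃ x, normA A x = 1 ∧ r = ‖innA A (T x) x‖}

/-- The `A`-Davis-Wielandt radius. -/
def dwA (A T : H →L[ℂ] H) : ℝ :=
  sSup {r | ∃ x, normA A x = 1 ∧
    r = Real.sqrt (‖innA A (T x) x‖ ^ 2 + normA A (T x) ^ 4)}

/-- The semi-inner product on `H ⊕ H` induced by `𝔸 = diag(A,A)`. -/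
def innA2 (A : H →L[ℂ] H) (z w : H × H) : ℂ := innA A z.1 w.1 + innA A z.2 w.2

/-- The seminorm on `H ⊕ H` induced by `𝔸 = diag(A,A)`. -/
def normA2 (A : H →L[ℂ] H) (z : H × H) : ℝ := Real.sqrt (innA2 A z z).re

/-- The `𝔸`-numerical radius on `H ⊕ H`, `𝔸 = diag(A,A)`. -/
def wA2 (A : H →L[ℂ] H) (T : H × H →L[ℂ] H × H) : ℝ :=
  sSup {r | ∃ z, normA2 A z = 1 ∧ r = ‖innA2 A (T z) z‖}

/-- The `𝔸`-Davis-Wielandt radius on `H ⊕ H`, `𝔸 = diag(A,A)`. -/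
def dwA2 (A : H →L[ℂ] H) (T : H × H →L[ℂ] H × H) : ℝ :=
  sSup {r | ∃ z, normA2 A z = 1 ∧
    r = Real.sqrt (‖innA2 A (T z) z‖ ^ 2 + normA2 A (T z) ^ 4)}

/-- The block operator `[[0, X], [Y, 0]]` on `H ⊕ H`. -/
def offDiag (X Y : H →L[ℂ] H) : H × H →L[ℂ] H × H :=
  (X.comp (ContinuousLinearMap.snd ℂ H H)).prod (Y.comp (ContinuousLinearMap.fst ℂ H H))

end DW

open DW

variable {H : Type*} [NormedAddCommGroup H] [InnerProductSpace ℂ H] [CompleteSpace H]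

/-- The semi-inner product core induced by a positive operator `A`. -/
def coreA (A : H →L[ℂ] H) (hA : A.IsPositive) : PreInnerProductSpace.Core ℂ H where
  inner u v := innA A u v
  conj_inner_symm u v := by
    simp only [innA]
    rw [← inner_conj_symm (A u) v]
    congr 1
    exact (ContinuousLinearMap.isSelfAdjoint_iff_isSymmetric.mp hA.isSelfAdjoint) v u
  re_inner_nonneg u := (Complex.nonneg_iff.mp (hA.inner_nonneg_left u)).1
  add_left u v w := by simp [innA, inner_add_left]
  smul_left u v r := by simp [innA, inner_smul_left, mul_comm]

theorem csA (A : H →L[ℂ] H) (hA : A.IsPositive) (u v : H) :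
    ‖innA A u v‖ ≤ normA A u * normA A v := by
  have h := @InnerProductSpace.Core.inner_mul_inner_self_le ℂ H _ _ _ (coreA A hA) u v
  have e1 : ∀ a b : H, @inner ℂ H (@InnerProductSpace.Core.toPreInner' ℂ H _ _ _ (coreA A hA)) a b
      = innA A a b := fun _ _ => rfl
  rw [e1, e1, e1, e1] at h
  have habs : ∀ a b : H, ‖innA A a b‖ = ‖innA A a b‖ := fun _ _ => rfl
  have hsymm : ‖innA A v u‖ = ‖innA A u v‖ := by
    have h2 := (coreA A hA).conj_inner_symm u v
    rw [e1, e1] at h2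
    rw [← h2]
    exact (Complex.norm_conj _).symm
  rw [habs, habs, hsymm] at h
  have h1 : ‖innA A u v‖ ^ 2 ≤ (innA A u u).re * (innA A v v).re := by
    rw [sq]; exact h
  have h3 := Real.sqrt_le_sqrt h1
  rw [Real.sqrt_sq (norm_nonneg _)] at h3
  calc ‖innA A u v‖ ≤ Real.sqrt ((innA A u u).re * (innA A v v).re) := h3
    _ = normA A u * normA A v := Real.sqrt_mul ((coreA A hA).re_inner_nonneg u) _

theorem stmt2 (A T : H →L[ℂ] H) (hA : A.IsPositive) (hT : IsABounded A T)
    (hdw : dwA A T = opNormA A T ^ 2)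
    (x : H) (hx : normA A x = 1) (hTx : normA A (T x) = opNormA A T) :
    innA A (T x) x = 0 := by
  obtain ⟨c, hc, hbd⟩ := hT
  set N := opNormA A T with hN
  have hN0 : 0 ≤ N := hTx ▸ Real.sqrt_nonneg _
  -- the element of the dwA set
  have hmem : Real.sqrt (‖innA A (T x) x‖ ^ 2 + normA A (T x) ^ 4) ∈
      {r | ∃ z, normA A z = 1 ∧
        r = Real.sqrt (‖innA A (T z) z‖ ^ 2 + normA A (T z) ^ 4)} :=
    ⟨x, hx, rfl⟩
  have hbdd : BddAbove {r | ∃ z, normA A z = 1 ∧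
      r = Real.sqrt (‖innA A (T z) z‖ ^ 2 + normA A (T z) ^ 4)} := by
    refine ⟨Real.sqrt (c ^ 2 + c ^ 4), ?_⟩
    rintro r ⟨z, hz, rfl⟩
    have h1 : normA A (T z) ≤ c := by
      have := hbd z; rwa [hz, mul_one] at this
    have h0 : 0 ≤ normA A (T z) := Real.sqrt_nonneg _
    have h2 : ‖innA A (T z) z‖ ≤ c := by
      calc ‖innA A (T z) z‖ ≤ normA A (T z) * normA A z := csA A hA _ _
        _ = normA A (T z) := by rw [hz, mul_one]
        _ ≤ c := h1
    apply Real.sqrt_le_sqrt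
    exact add_le_add (pow_le_pow_left₀ (norm_nonneg _) h2 2) (pow_le_pow_left₀ h0 h1 4)
  have hle : Real.sqrt (‖innA A (T x) x‖ ^ 2 + normA A (T x) ^ 4) ≤ dwA A T :=
    le_csSup hbdd hmem
  rw [hdw, hTx] at hle
  have hsq : ‖innA A (T x) x‖ ^ 2 + N ^ 4 ≤ (N ^ 2) ^ 2 := by
    nlinarith [Real.sq_sqrt (by positivity : (0:ℝ) ≤ ‖innA A (T x) x‖ ^ 2 + N ^ 4),
      Real.sqrt_nonneg (‖innA A (T x) x‖ ^ 2 + N ^ 4), hle]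
  have : ‖innA A (T x) x‖ = 0 := by nlinarith [norm_nonneg (innA A (T x) x)]
  exact norm_eq_zero.mp this
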